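/- In the k-shortcut graph (H'',w''), for every pair of vertices u, v ∈ S there is a path of minimum w''-length from u to v using fewer than 4m/k edges; that is, the hop diameter of (H'',w'') is less than 4m/k. -/

import Mathlib

open scoped ENNReal

/-- The length of a walk with respect to `ℝ≥0∞` edge weights. -/
noncomputable def wlen {V : Type*} (G : SimpleGraph V) (w : V → V → ℝ≥0∞) {u v : V}
    (p : G.Walk u v) : ℝ≥0∞ :=
  (p.darts.map fun d => w d.toProd.1 d.toProd.2).sum

/-- The weighted distance: the infimum of walk lengths. -/
noncomputable def wdist {V : Type*} (G : SimpleGraph V) (w : V → V → ℝ≥0∞) (u v : V) : ℝ≥0∞ :=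
  ⨅ p : G.Walk u v, wlen G w p

/-- The weights of the `k`-shortcut graph: `w''(u,v) = d_{H,w}(u,v)` if `u ∈ N(v)` or
`v ∈ N(u)`, and `w''(u,v) = w(u,v)` otherwise.  (The underlying graph is the complete
graph `⊤` on `S`.) -/
noncomputable def shortcutW {S : Type*} [DecidableEq S] (w : S → S → ℝ≥0∞)
    (N : S → Finset S) : S → S → ℝ≥0∞ :=
  fun u v => if u ∈ N v ∨ v ∈ N u then wdist (⊤ : SimpleGraph S) w u v else w u v

section Helpers

open SimpleGraph

variable {V : Type*} {G : SimpleGraph V}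

lemma wlen_nil (W : V → V → ℝ≥0∞) (u : V) :
    wlen G W (Walk.nil : G.Walk u u) = 0 := rfl

lemma wlen_cons (W : V → V → ℝ≥0∞) {u x v : V} (h : G.Adj u x) (p : G.Walk x v) :
    wlen G W (Walk.cons h p) = W u x + wlen G W p := by
  simp [wlen]

lemma wlen_append (W : V → V → ℝ≥0∞) {u x v : V} (p : G.Walk u x) (q : G.Walk x v) :
    wlen G W (p.append q) = wlen G W p + wlen G W q := by
  simp [wlen, Walk.darts_append]

lemma wlen_copy (W : V → V → ℝ≥0∞) {u v u' v' : V} (p : G.Walk u v)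
    (h1 : u = u') (h2 : v = v') :
    wlen G W (p.copy h1 h2) = wlen G W p := by
  subst h1; subst h2; rfl

lemma wdist_le_wlen (W : V → V → ℝ≥0∞) {u v : V} (p : G.Walk u v) :
    wdist G W u v ≤ wlen G W p :=
  iInf_le _ _

lemma wdist_triangle (W : V → V → ℝ≥0∞) (u y z : V) :
    wdist G W u z ≤ wdist G W u y + wdist G W y z := by
  simp only [wdist]
  rw [ENNReal.iInf_add]
  refine le_iInf fun p => ?_
  rw [ENNReal.add_iInf]
  refine le_iInf fun q => ?_
  exact (iInf_le _ (p.append q)).trans_eq (wlen_append W p q)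

lemma wlen_reverse {W : V → V → ℝ≥0∞} (hs : ∀ a b, W a b = W b a) {u v : V}
    (p : G.Walk u v) : wlen G W p.reverse = wlen G W p := by
  unfold wlen
  rw [Walk.darts_reverse, List.map_reverse, List.sum_reverse, List.map_map]
  congr 1
  refine List.map_congr_left fun d _ => ?_
  exact (hs _ _).symm

lemma wdist_comm {W : V → V → ℝ≥0∞} (hs : ∀ a b, W a b = W b a) (u v : V) :
    wdist G W u v = wdist G W v u := by
  refine le_antisymm ?_ ?_ <;>
    exact le_iInf fun q => (wdist_le_wlen _ q.reverse).trans (wlen_reverse hs q).le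

lemma wdist_lb {w W : V → V → ℝ≥0∞}
    (hW : ∀ a b, G.Adj a b → wdist G w a b ≤ W a b) {x y : V} (p : G.Walk x y) :
    wdist G w x y ≤ wlen G W p := by
  induction p with
  | nil => exact wdist_le_wlen _ Walk.nil
  | @cons a b c h q ih =>
    rw [wlen_cons]
    exact (wdist_triangle w a b c).trans (add_le_add (hW _ _ h) ih)

lemma sum_le_sum_of_subperm {α : Type*} (f : α → ℝ≥0∞) {l₁ l₂ : List α}
    (h : List.Subperm l₁ l₂) : (l₁.map f).sum ≤ (l₂.map f).sum := by
  obtain ⟨l, hp, hs⟩ := h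
  calc (l₁.map f).sum = (l.map f).sum := ((hp.map f).sum_eq).symm
    _ ≤ (l₂.map f).sum := (hs.map f).sum_le_sum fun a _ => zero_le

lemma wlen_bypass_le [DecidableEq V] (W : V → V → ℝ≥0∞) {u v : V} (p : G.Walk u v) :
    wlen G W p.bypass ≤ wlen G W p := by
  have hnd : p.bypass.darts.Nodup := by
    have := (Walk.bypass_isPath p).isTrail.edges_nodup
    exact List.Nodup.of_map _ this
  exact sum_le_sum_of_subperm _ (hnd.subperm (Walk.darts_bypass_subset p))

lemma exists_min_walk [Fintype V] [DecidableEq V] [DecidableRel G.Adj]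
    (W : V → V → ℝ≥0∞) (u v : V) (h : Nonempty (G.Walk u v)) :
    ∃ p : G.Walk u v, wlen G W p = wdist G W u v := by
  obtain ⟨q⟩ := h
  have hne : (Finset.univ : Finset (G.Path u v)).Nonempty :=
    ⟨⟨q.bypass, q.bypass_isPath⟩, Finset.mem_univ _⟩
  obtain ⟨p₀, -, hp₀⟩ := Finset.exists_min_image Finset.univ
    (fun p : G.Path u v => wlen G W p.val) hne
  refine ⟨p₀.val, le_antisymm (le_iInf fun q' => ?_) (wdist_le_wlen _ _)⟩
  exact (hp₀ ⟨q'.bypass, q'.bypass_isPath⟩ (Finset.mem_univ _)).trans (wlen_bypass_le W q')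

lemma walk_split {u v : V} (p : G.Walk u v) (n : ℕ) (hn : n ≤ p.length) {y : V}
    (hy : p.getVert n = y) :
    ∃ (A : G.Walk u y) (C : G.Walk y v), p = A.append C ∧ A.length = n ∧
      (∀ m, m ≤ n → A.getVert m = p.getVert m) ∧
      (∀ m, C.getVert m = p.getVert (n + m)) := by
  induction p generalizing n y with
  | nil =>
    have hn0 : n = 0 := Nat.le_zero.mp hn
    subst hn0
    subst hy
    exact ⟨Walk.nil, Walk.nil, rfl, rfl, fun m _ => rfl, fun m => rfl⟩
  | @cons a b c h q ih =>
    cases n with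
    | zero =>
      subst hy
      refine ⟨Walk.nil, Walk.cons h q, rfl, rfl, ?_, fun m => by rw [Nat.zero_add]; rfl⟩
      intro m hm
      interval_cases m
      rfl
    | succ n =>
      have hn' : n ≤ q.length := by simpa [Walk.length_cons] using hn
      have hy' : q.getVert n = y := by simpa using hy
      obtain ⟨A, C, h1, h2, h3, h4⟩ := ih n hn' hy'
      refine ⟨Walk.cons h A, C, ?_, by simp [h2], ?_, ?_⟩
      · rw [Walk.cons_append, ← h1]
      · intro m hm
        cases m with
        | zero => simp
        | succ m =>
          rw [Walk.getVert_cons_succ, Walk.getVert_cons_succ]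
          exact h3 m (by omega)
      · intro m
        have : n + 1 + m = (n + m) + 1 := by omega
        rw [this, Walk.getVert_cons_succ]
        exact h4 m

end Helpers

/-- In the `k`-shortcut graph `(H'',w'')` of a complete weighted graph
`(H,w)` on `m = |S| ≥ 2` vertices, for every pair of vertices `u, v ∈ S` there is a path
of minimum `w''`-length from `u` to `v` using fewer than `4m/k` edges. -/
theorem stmt16 {S : Type*} [Fintype S] [DecidableEq S] (hm : 2 ≤ Fintype.card S)
    (w : S → S → ℝ≥0∞) (hsymm : ∀ u v, w u v = w v u)
    (hpos : ∀ u v, u ≠ v → 0 < w u v) (hfin : ∀ u v, w u v ≠ ⊤)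
    (k : ℕ) (hk1 : 1 ≤ k) (hk2 : k ≤ Fintype.card S - 1)
    (N : S → Finset S) (hNself : ∀ v, v ∉ N v) (hNcard : ∀ v, (N v).card = k)
    (hNnear : ∀ v, ∀ u ∈ N v, ∀ z, z ∉ N v → z ≠ v →
      wdist (⊤ : SimpleGraph S) w v u ≤ wdist (⊤ : SimpleGraph S) w v z)
    (u v : S) :
    ∃ p : (⊤ : SimpleGraph S).Walk u v,
      wlen (⊤ : SimpleGraph S) (shortcutW w N) p =
        wdist (⊤ : SimpleGraph S) (shortcutW w N) u v ∧
      (p.length : ℝ) < 4 * (Fintype.card S : ℝ) / (k : ℝ) := by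
  classical
  set G : SimpleGraph S := ⊤ with hG
  set W'' : S → S → ℝ≥0∞ := shortcutW w N with hW''
  -- w'' dominates the original weighted distance on edges
  have hWle : ∀ a b : S, G.Adj a b → wdist G w a b ≤ W'' a b := by
    intro a b hab
    simp only [hW'', shortcutW]
    split
    · exact le_rfl
    · refine (wdist_le_wlen w (SimpleGraph.Walk.cons hab SimpleGraph.Walk.nil)).trans ?_
      rw [wlen_cons, wlen_nil, add_zero]
  -- There is a walk from u to v
  have hne : Nonempty (G.Walk u v) := by
    by_cases huv : u = v
    · subst huv; exact ⟨SimpleGraph.Walk.nil⟩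
    · exact ⟨SimpleGraph.Walk.cons (by simp [hG, huv]) SimpleGraph.Walk.nil⟩
  obtain ⟨q₀, hq₀⟩ := exists_min_walk W'' u v hne
  -- choose a minimum-length optimal walk with the fewest edges
  have hT : ∃ n, ∃ p : G.Walk u v, wlen G W'' p = wdist G W'' u v ∧ p.length = n :=
    ⟨q₀.length, q₀, hq₀, rfl⟩
  obtain ⟨p, hpopt, hpt⟩ := Nat.find_spec hT
  have hmin : ∀ q : G.Walk u v, wlen G W'' q = wdist G W'' u v → Nat.find hT ≤ q.length :=
    fun q hq => Nat.find_min' hT ⟨q, hq, rfl⟩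
  -- surgery lemma
  have surg : ∀ i j : ℕ, i ≤ j → j ≤ p.length →
      ∃ B : G.Walk (p.getVert i) (p.getVert j), B.length = j - i ∧
        (∀ m, m ≤ j - i → B.getVert m = p.getVert (i + m)) ∧
        (∀ q : G.Walk (p.getVert i) (p.getVert j),
          wlen G W'' q ≤ wlen G W'' B → j - i ≤ q.length) := by
    intro i j hij hj
    obtain ⟨A, C, hAC, hAlen, hAget, hCget⟩ := walk_split p i (le_trans hij hj) rfl
    have hClen : C.length = p.length - i := by
      have := congrArg SimpleGraph.Walk.length hAC
      rw [SimpleGraph.Walk.length_append, hAlen] at this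
      omega
    have hyB : C.getVert (j - i) = p.getVert j :=
      (hCget (j - i)).trans (congrArg p.getVert (by omega))
    obtain ⟨B, C₂, hBC, hBlen, hBget, hC₂get⟩ := walk_split C (j - i) (by omega) hyB
    refine ⟨B, hBlen, ?_, ?_⟩
    · intro m hm
      exact (hBget m (by omega)).trans (hCget m)
    · intro q hq
      have hp' : wlen G W'' p = wlen G W'' A + (wlen G W'' B + wlen G W'' C₂) := by
        conv_lhs => rw [hAC, hBC]
        rw [wlen_append, wlen_append]
      have hnew : wlen G W'' (A.append (q.append C₂)) ≤ wlen G W'' p := by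
        rw [hp', wlen_append, wlen_append]
        exact add_le_add_right (add_le_add_left hq _) _
      have hopt' : wlen G W'' (A.append (q.append C₂)) = wdist G W'' u v :=
        le_antisymm (hpopt ▸ hnew) (wdist_le_wlen _ _)
      have h1 := hmin _ hopt'
      have hl1 : p.length = A.length + (B.length + C₂.length) := by
        conv_lhs => rw [hAC, hBC]
        simp [SimpleGraph.Walk.length_append]
      have hl2 : (A.append (q.append C₂)).length = A.length + (q.length + C₂.length) := by
        simp [SimpleGraph.Walk.length_append]
      rw [hl2] at h1
      omega
  -- distinct vertices along p
  have FactInj : ∀ i j : ℕ, i < j → j ≤ p.length → p.getVert i ≠ p.getVert j := by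
    intro i j hij hj heq
    obtain ⟨B, -, -, hB⟩ := surg i j (le_of_lt hij) hj
    have := hB (SimpleGraph.Walk.nil.copy rfl heq) (by rw [wlen_copy, wlen_nil]; exact zero_le)
    simp [SimpleGraph.Walk.length_copy] at this
    omega
  -- no shortcut edges between far-apart vertices of p
  have FactA : ∀ i j : ℕ, i + 2 ≤ j → j ≤ p.length →
      ¬(p.getVert i ∈ N (p.getVert j) ∨ p.getVert j ∈ N (p.getVert i)) := by
    intro i j hij hj hmem
    obtain ⟨B, -, -, hB⟩ := surg i j (by omega) hj
    have hadj : G.Adj (p.getVert i) (p.getVert j) := by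
      simp only [hG, SimpleGraph.top_adj]
      exact FactInj i j (by omega) hj
    have hq : wlen G W'' (SimpleGraph.Walk.cons hadj SimpleGraph.Walk.nil) ≤ wlen G W'' B := by
      rw [wlen_cons, wlen_nil, add_zero]
      simp only [hW'', shortcutW]
      rw [if_pos hmem]
      exact wdist_lb hWle B
    have := hB _ hq
    simp [SimpleGraph.Walk.length_cons] at this
    omega
  -- far-apart vertices of p have disjoint neighbor sets
  have FactB : ∀ a e : ℕ, ∀ z : S, a + 4 ≤ e → e ≤ p.length →
      z ∈ N (p.getVert a) → z ∈ N (p.getVert e) → False := by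
    intro a e z hae he hzA hzE
    obtain ⟨B, hBlen, hBget, hB⟩ := surg a e (by omega) he
    set c := a + 2 with hc
    have hcA : ¬(p.getVert a ∈ N (p.getVert c) ∨ p.getVert c ∈ N (p.getVert a)) :=
      FactA a c (by omega) (by omega)
    have hcE : ¬(p.getVert c ∈ N (p.getVert e) ∨ p.getVert e ∈ N (p.getVert c)) :=
      FactA c e (by omega) he
    have d1 : wdist G w (p.getVert a) z ≤ wdist G w (p.getVert a) (p.getVert c) :=
      hNnear (p.getVert a) z hzA (p.getVert c)
        (fun hmem => hcA (Or.inr hmem)) (FactInj a c (by omega) (by omega)).symm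
    have d2 : wdist G w (p.getVert e) z ≤ wdist G w (p.getVert e) (p.getVert c) :=
      hNnear (p.getVert e) z hzE (p.getVert c)
        (fun hmem => hcE (Or.inl hmem)) (FactInj c e (by omega) he)
    have haz : G.Adj (p.getVert a) z := by
      simp only [hG, SimpleGraph.top_adj]
      intro h
      exact hNself _ (h ▸ hzA)
    have hze : G.Adj z (p.getVert e) := by
      simp only [hG, SimpleGraph.top_adj]
      intro h
      exact hNself _ (h.symm ▸ hzE)
    have hmid2 : B.getVert 2 = p.getVert c := hBget 2 (by omega)
    obtain ⟨B1, B2, hB12, -, -, -⟩ := walk_split B 2 (by omega) hmid2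
    have hlow : wdist G w (p.getVert a) (p.getVert c) + wdist G w (p.getVert c) (p.getVert e) ≤
        wlen G W'' B := by
      rw [hB12, wlen_append]
      exact add_le_add (wdist_lb hWle B1) (wdist_lb hWle B2)
    have hq : wlen G W'' (SimpleGraph.Walk.cons haz (SimpleGraph.Walk.cons hze
        SimpleGraph.Walk.nil)) ≤ wlen G W'' B := by
      rw [wlen_cons, wlen_cons, wlen_nil, add_zero]
      have e1 : W'' (p.getVert a) z = wdist G w (p.getVert a) z := by
        simp only [hW'', shortcutW]
        rw [if_pos (Or.inr hzA)]
      have e2 : W'' z (p.getVert e) = wdist G w z (p.getVert e) := by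
        simp only [hW'', shortcutW]
        rw [if_pos (Or.inl hzE)]
      rw [e1, e2]
      refine le_trans (add_le_add d1 ?_) hlow
      calc wdist G w z (p.getVert e) = wdist G w (p.getVert e) z := wdist_comm hsymm _ _
        _ ≤ wdist G w (p.getVert e) (p.getVert c) := d2
        _ = wdist G w (p.getVert c) (p.getVert e) := wdist_comm hsymm _ _
    have hcon := hB _ hq
    simp [SimpleGraph.Walk.length_cons] at hcon
    omega
  -- the counting argument
  set t := p.length with ht
  have hBcard : ∀ i : ℕ, (insert (p.getVert i) (N (p.getVert i))).card = k + 1 := by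
    intro i
    rw [Finset.card_insert_of_notMem (hNself _), hNcard]
  have hdisj : ∀ i j : ℕ, i + 4 ≤ j → j ≤ t →
      Disjoint (insert (p.getVert i) (N (p.getVert i)))
        (insert (p.getVert j) (N (p.getVert j))) := by
    intro i j h4 hj
    rw [Finset.disjoint_left]
    intro z hzi hzj
    rw [Finset.mem_insert] at hzi hzj
    rcases hzi with rfl | hzi
    · rcases hzj with heq | hzj
      · exact FactInj i j (by omega) hj heq
      · exact FactA i j (by omega) hj (Or.inl hzj)
    · rcases hzj with rfl | hzj
      · exact FactA i j (by omega) hj (Or.inr hzi)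
      · exact FactB i j z h4 hj hzi hzj
  have hsum : ∀ r : ℕ, (((Finset.range (t + 1)).filter (fun i => i % 4 = r)).sum
      (fun i => (insert (p.getVert i) (N (p.getVert i))).card)) ≤ Fintype.card S := by
    intro r
    rw [← Finset.card_biUnion]
    · exact Finset.card_le_univ _
    · intro a ha b hb hab
      rw [Finset.mem_coe, Finset.mem_filter, Finset.mem_range] at ha hb
      rcases Nat.lt_or_ge a b with h | h
      · exact hdisj a b (by omega) (by omega)
      · exact (hdisj b a (by omega) (by omega)).symm
  have hfiber : (Finset.range (t + 1)).card =
      (Finset.range 4).sum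
        (fun r => ((Finset.range (t + 1)).filter (fun i => i % 4 = r)).card) :=
    Finset.card_eq_sum_card_fiberwise
      (fun i _ => Finset.mem_range.mpr (Nat.mod_lt _ (by norm_num)))
  have htotal : (t + 1) * (k + 1) ≤ 4 * Fintype.card S := by
    have step : ∀ r : ℕ,
        ((Finset.range (t + 1)).filter (fun i => i % 4 = r)).card * (k + 1) ≤
          Fintype.card S := by
      intro r
      calc ((Finset.range (t + 1)).filter (fun i => i % 4 = r)).card * (k + 1)
          = (((Finset.range (t + 1)).filter (fun i => i % 4 = r)).sum
              (fun i => (insert (p.getVert i) (N (p.getVert i))).card)) := by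
            rw [Finset.sum_congr rfl (fun i _ => hBcard i), Finset.sum_const,
              smul_eq_mul]
        _ ≤ Fintype.card S := hsum r
    calc (t + 1) * (k + 1)
        = ((Finset.range 4).sum
            (fun r => ((Finset.range (t + 1)).filter (fun i => i % 4 = r)).card)) * (k + 1) := by
          rw [← hfiber, Finset.card_range]
      _ = (Finset.range 4).sum
            (fun r => ((Finset.range (t + 1)).filter (fun i => i % 4 = r)).card * (k + 1)) := by
          rw [Finset.sum_mul]
      _ ≤ (Finset.range 4).sum (fun _ => Fintype.card S) :=
          Finset.sum_le_sum (fun r _ => step r)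
      _ = 4 * Fintype.card S := by
          rw [Finset.sum_const, Finset.card_range, smul_eq_mul]
  refine ⟨p, hpopt, ?_⟩
  have hk0 : (0 : ℝ) < (k : ℝ) := by exact_mod_cast hk1
  rw [lt_div_iff₀ hk0]
  have hnat : t * k < 4 * Fintype.card S := by
    have hid : (t + 1) * (k + 1) = t * k + t + k + 1 := by ring
    omega
  calc ((p.length : ℝ)) * (k : ℝ) = ((t * k : ℕ) : ℝ) := by push_cast [ht]; ring
    _ < ((4 * Fintype.card S : ℕ) : ℝ) := by exact_mod_cast hnat
    _ = 4 * (Fintype.card S : ℝ) := by push_cast; ring
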